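/- Stability of the standard ICN method: for every real β, the complex number g = 1 − 2βi − 2β² + 2β³·i satisfies |g|² = 1 − 4β⁴(1 − β²); in particular, |g| ≤ 1 whenever β² ≤ 1. -/

import Mathlib

open Complex

theorem icn_stability (β : ℝ)
    (g : ℂ)
    (hg : g = 1 - 2 * (β : ℂ) * Complex.I - 2 * (β : ℂ) ^ 2
        + 2 * (β : ℂ) ^ 3 * Complex.I) :
    ‖g‖ ^ 2 = 1 - 4 * β ^ 4 * (1 - β ^ 2) ∧
      (β ^ 2 ≤ 1 → ‖g‖ ≤ 1) := by
  have h1 : ‖g‖ ^ 2 = 1 - 4 * β ^ 4 * (1 - β ^ 2) := by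
    rw [Complex.sq_norm, hg, Complex.normSq_apply]
    simp [Complex.add_re, Complex.add_im, Complex.sub_re, Complex.sub_im,
      Complex.mul_re, Complex.mul_im, ← Complex.ofReal_pow]
    ring
  refine ⟨h1, fun hb => ?_⟩
  have h2 : ‖g‖ ^ 2 ≤ 1 := by
    rw [h1]
    nlinarith [sq_nonneg β, sq_nonneg (β ^ 2)]
  nlinarith [norm_nonneg g]
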